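/- Let D : A → A be a k-linear map satisfying the graded Leibniz rule such that D(x_i) is a homogeneous polynomial of degree 2 for every i ∈ Fin n. Then there exists t : Fin n → k such that D(x_i) = x_i * (∑_{j} t j • x_j) for all i ∈ Fin n. -/

import Mathlib

open MvPolynomial

lemma aux_degree_add {σ : Type*} (a b : σ →₀ ℕ) :
    (a + b).degree = a.degree + b.degree := by
  simp only [Finsupp.degree_eq_weight_one]
  exact map_add (Finsupp.weight 1) a b

lemma aux_degree_single {σ : Type*} (i : σ) (m : ℕ) :
    (Finsupp.single i m).degree = m := by
  rcases eq_or_ne m 0 with h | h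
  · simp [h]
  · rw [Finsupp.degree_apply, Finsupp.support_single_ne_zero _ h]
    simp

/-- If a k-linear map `D` on `k[x_1,…,x_n]` satisfies the graded Leibniz rule
and sends each variable to a homogeneous polynomial of degree 2, then there is `t : Fin n → k`
with `D (X i) = X i * ∑ j, t j • X j` for all `i`. -/
theorem stmt_0 (k : Type*) [Field k] [CharZero k] (n : ℕ)
    (D : MvPolynomial (Fin n) k →ₗ[k] MvPolynomial (Fin n) k)
    (hLeib : ∀ (d : ℕ) (a b : MvPolynomial (Fin n) k), a.IsHomogeneous d →
      D (a * b) = D a * b + ((-1 : k) ^ d) • (a * D b))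
    (hdeg : ∀ i : Fin n, (D (X i)).IsHomogeneous 2) :
    ∃ t : Fin n → k, ∀ i : Fin n, D (X i) = X i * ∑ j : Fin n, t j • X j := by
  classical
  set c : Fin n → MvPolynomial (Fin n) k := fun i => D (X i) with hc
  have hrel : ∀ i j : Fin n, X j * c i = X i * c j := by
    intro i j
    have h1 := hLeib 1 (X i) (X j) (isHomogeneous_X k i)
    have h2 := hLeib 1 (X j) (X i) (isHomogeneous_X k j)
    rw [mul_comm (X j : MvPolynomial (Fin n) k) (X i)] at h2
    have key := h1.symm.trans h2
    simp only [pow_one, neg_one_smul] at key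
    have key2 : (2 : MvPolynomial (Fin n) k) * (X j * c i)
        = 2 * (X i * c j) := by
      simp only [hc]
      linear_combination key
    exact mul_left_cancel₀ two_ne_zero key2
  set t : Fin n → k := fun j =>
    coeff (Finsupp.single j 1 + Finsupp.single j 1) (c j) with ht
  set L : MvPolynomial (Fin n) k := ∑ j : Fin n, t j • X j with hLdef
  have hL1 : L.IsHomogeneous 1 := by
    apply IsHomogeneous.sum
    intro j _
    rw [smul_eq_C_mul]
    exact (isHomogeneous_X k j).C_mul _
  have hcoeff : ∀ i j : Fin n,
      coeff (Finsupp.single i 1 + Finsupp.single j 1) (c i) = t j := by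
    intro i j
    have h := congrArg
      (coeff (Finsupp.single j 1 + (Finsupp.single i 1 + Finsupp.single j 1)))
      (hrel i j)
    rw [coeff_X_mul, add_left_comm, coeff_X_mul] at h
    exact h
  have hcL : ∀ j : Fin n, coeff (Finsupp.single j 1) L = t j := by
    intro j
    rw [hLdef, coeff_sum]
    simp only [coeff_smul, coeff_X', smul_eq_mul]
    rw [Finset.sum_eq_single j]
    · simp
    · intro b _ hb
      rw [if_neg, mul_zero]
      intro hsingle
      exact hb (by
        have := Finsupp.single_left_injective (α := Fin n) one_ne_zero hsingle
        exact this)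
    · simp
  refine ⟨t, fun i => ?_⟩
  show c i = X i * L
  ext m
  rw [coeff_X_mul' m i L]
  by_cases hmi : i ∈ m.support
  · have hle : Finsupp.single i 1 ≤ m := by
      rw [Finsupp.single_le_iff]
      exact Nat.one_le_iff_ne_zero.mpr (Finsupp.mem_support_iff.mp hmi)
    set m' := m - Finsupp.single i 1 with hm'
    have hm : m = Finsupp.single i 1 + m' := by
      rw [hm', add_tsub_cancel_of_le hle]
    rw [if_pos hmi]
    by_cases hd : m'.degree = 1
    · have hm'ne : m' ≠ 0 := by
        intro h0; rw [h0, map_zero] at hd; exact one_ne_zero hd.symm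
      obtain ⟨j, hj⟩ := Finsupp.ne_iff.mp hm'ne
      simp only [Finsupp.coe_zero, Pi.zero_apply] at hj
      have hlej : Finsupp.single j 1 ≤ m' := by
        rw [Finsupp.single_le_iff]
        exact Nat.one_le_iff_ne_zero.mpr hj
      have hm'eq : m' = Finsupp.single j 1 := by
        have h2 : m' = Finsupp.single j 1 + (m' - Finsupp.single j 1) :=
          (add_tsub_cancel_of_le hlej).symm
        have hd0 : (m' - Finsupp.single j 1).degree = 0 := by
          have := hd
          rw [h2, aux_degree_add, aux_degree_single] at this
          omega
        rw [Finsupp.degree_eq_zero_iff] at hd0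
        rw [h2, hd0, add_zero]
      rw [hm, hm'eq, hcoeff i j]
      exact (hcL j).symm
    · have hdm : m.degree ≠ 2 := by
        rw [hm, aux_degree_add, aux_degree_single]
        omega
      rw [(hdeg i).coeff_eq_zero hdm, hL1.coeff_eq_zero hd]
  · rw [if_neg hmi]
    by_contra h
    have hdm : m.degree = 2 := by
      by_contra hne
      exact h ((hdeg i).coeff_eq_zero hne)
    have hmne : m ≠ 0 := by
      intro h0; rw [h0, map_zero] at hdm; omega
    obtain ⟨j, hj⟩ := Finsupp.ne_iff.mp hmne
    simp only [Finsupp.coe_zero, Pi.zero_apply] at hj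
    have hji : j ≠ i := by
      intro h0
      exact hj (h0 ▸ Finsupp.notMem_support_iff.mp hmi)
    have h2 : coeff m (c i)
        = coeff (Finsupp.single j 1 + m) (X j * c i) := (coeff_X_mul m j (c i)).symm
    rw [hrel i j, coeff_X_mul' _ i (c j)] at h2
    rw [if_neg ?_] at h2
    · exact h h2
    · rw [Finsupp.mem_support_iff]
      simp only [Finsupp.add_apply, Finsupp.single_apply, if_neg hji,
        Finsupp.notMem_support_iff.mp hmi]
      simp
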